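/- Let p be prime, E ∈ F_p[x,y] a nonzero polynomial with d = deg_y E ≥ 1, and f ∈ F_p[[x]] with E(x, f(x)) = 0. Then the d+1 power series f(x), f(x^p), f(x^{p^2}), ..., f(x^{p^d}) are linearly dependent over the field of rational functions F_p(x). -/

import Mathlib

open PowerSeries

/-- Substitution of `x^q` into a formal power series: `(psub q z)(x) = z(x^q)`. -/
noncomputable def psub {R : Type*} [Semiring R] (q : ℕ) (z : PowerSeries R) : PowerSeries R :=
  PowerSeries.mk fun n => if q ∣ n then PowerSeries.coeff (R := R) (n / q) z else 0

/-- The section operator `S_r` : sends `Σ z_n x^n` to `Σ z_{pn+r} x^n`. -/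
noncomputable def sect {R : Type*} [Semiring R] (p r : ℕ) (z : PowerSeries R) : PowerSeries R :=
  PowerSeries.mk fun n => PowerSeries.coeff (R := R) (p * n + r) z

/-- The `x`-degree of a polynomial `E ∈ R[x][y]` (outer variable is `y`). -/
noncomputable def degX {R : Type*} [CommSemiring R] (E : Polynomial (Polynomial R)) : ℕ :=
  E.support.sup fun n => (E.coeff n).natDegree

theorem psub_one {R : Type*} [Semiring R] (f : PowerSeries R) : psub 1 f = f := by
  ext n; simp [psub]

theorem psub_psub {R : Type*} [Semiring R] (a b : ℕ) (f : PowerSeries R) :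
    psub a (psub b f) = psub (a * b) f := by
  ext n
  simp only [psub, PowerSeries.coeff_mk]
  by_cases h : a ∣ n
  · rw [if_pos h]
    by_cases h2 : b ∣ n / a
    · rw [if_pos h2, if_pos ((Nat.dvd_div_iff_mul_dvd h).mp h2), Nat.div_div_eq_div_mul]
    · rw [if_neg h2, if_neg (fun hab => h2 ((Nat.dvd_div_iff_mul_dvd h).mpr hab))]
  · rw [if_neg h, if_neg (fun hab => h ((dvd_mul_right a b).trans hab))]

theorem psub_p (p : ℕ) [hp : Fact p.Prime] (f : PowerSeries (ZMod p)) :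
    psub p f = f ^ p := by
  have hp0 : 0 < p := hp.out.pos
  haveI : CharP (PowerSeries (ZMod p)) p :=
    charP_of_injective_ringHom (R := ZMod p)
      (f := (PowerSeries.C (R := ZMod p) : ZMod p →+* PowerSeries (ZMod p)))
      (fun a b h => by simpa using congrArg (PowerSeries.constantCoeff (R := ZMod p)) h) p
  ext n
  set g := PowerSeries.trunc (n + 1) f with hg
  have hdvd : (PowerSeries.X : PowerSeries (ZMod p)) ^ (n + 1) ∣ f - (g : PowerSeries (ZMod p)) := by
    rw [PowerSeries.X_pow_dvd_iff]
    intro m hm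
    simp [hg, PowerSeries.coeff_trunc, hm, Polynomial.coeff_coe]
  obtain ⟨h0, hh⟩ := hdvd
  have hf : f = (g : PowerSeries (ZMod p)) + PowerSeries.X ^ (n + 1) * h0 := by
    rw [← hh]; ring
  have hpow : f ^ p = (g : PowerSeries (ZMod p)) ^ p + (PowerSeries.X ^ (n + 1) * h0) ^ p := by
    rw [hf, add_pow_char]
  have hexp : (Polynomial.expand (ZMod p) p) g = g ^ p := by
    rw [← Polynomial.map_frobenius_expand p g, ZMod.frobenius_zmod, Polynomial.map_id]
  have hz : (PowerSeries.coeff n) ((PowerSeries.X ^ (n + 1) * h0 : PowerSeries (ZMod p)) ^ p) = 0 := by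
    have : (PowerSeries.X : PowerSeries (ZMod p)) ^ ((n + 1) * p) ∣ (PowerSeries.X ^ (n + 1) * h0) ^ p := by
      rw [mul_pow, ← pow_mul]
      exact dvd_mul_right _ _
    exact PowerSeries.X_pow_dvd_iff.mp this n (lt_of_lt_of_le (Nat.lt_succ_self n)
      (Nat.le_mul_of_pos_right _ hp0))
  have key : (PowerSeries.coeff n) (f ^ p)
      = if p ∣ n then Polynomial.coeff g (n / p) else 0 := by
    rw [hpow, map_add, hz, add_zero, ← Polynomial.coe_pow, Polynomial.coeff_coe, ← hexp,
      Polynomial.coeff_expand hp0]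
  rw [key]
  simp only [psub, PowerSeries.coeff_mk]
  by_cases h : p ∣ n
  · rw [if_pos h, if_pos h, hg, PowerSeries.coeff_trunc,
      if_pos (Nat.lt_succ_of_le (Nat.div_le_self n p))]
  · rw [if_neg h, if_neg h]

theorem psub_pow_p (p : ℕ) [hp : Fact p.Prime] (i : ℕ) (f : PowerSeries (ZMod p)) :
    psub (p ^ i) f = f ^ (p ^ i) := by
  induction i generalizing f with
  | zero => simpa using psub_one f
  | succ i ih =>
    have h1 : psub (p ^ (i + 1)) f = psub (p ^ i) (psub p f) := by
      rw [psub_psub, ← pow_succ]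
    rw [h1, psub_p, ih, ← pow_mul, ← pow_succ']

open scoped RatFunc

set_option maxHeartbeats 1000000 in
set_option synthInstance.maxHeartbeats 400000 in
theorem frobenius_powers_linearly_dependent (p : ℕ) (hp : p.Prime)
    (E : Polynomial (Polynomial (ZMod p))) (hE : E ≠ 0) (hd : 1 ≤ E.natDegree)
    (f : PowerSeries (ZMod p))
    (hf : Polynomial.eval₂ ((Polynomial.coeToPowerSeries.ringHom : Polynomial (ZMod p) →+* PowerSeries (ZMod p))) f E = 0) :
    ∃ dcoef : Fin (E.natDegree + 1) → Polynomial (ZMod p),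
      (∃ i, dcoef i ≠ 0) ∧
      ∑ i, (dcoef i : PowerSeries (ZMod p)) * psub (p ^ (i : ℕ)) f = 0 := by
  haveI : Fact p.Prime := ⟨hp⟩
  set d := E.natDegree with hdd
  let φ : PowerSeries (ZMod p) →+* LaurentSeries (ZMod p) := HahnSeries.ofPowerSeries ℤ (ZMod p)
  set F : LaurentSeries (ZMod p) := φ f with hF
  set E' : Polynomial (RatFunc (ZMod p)) := E.map (algebraMap (Polynomial (ZMod p)) (RatFunc (ZMod p))) with hE'def
  have hinj : Function.Injective (algebraMap (Polynomial (ZMod p)) (RatFunc (ZMod p))) :=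
    IsFractionRing.injective _ _
  have hE' : E' ≠ 0 := fun h => hE (Polynomial.map_injective _ hinj (by simpa using h))
  have hcomp : (algebraMap (RatFunc (ZMod p)) (LaurentSeries (ZMod p))).comp (algebraMap (Polynomial (ZMod p)) (RatFunc (ZMod p)))
      = φ.comp (Polynomial.coeToPowerSeries.ringHom : Polynomial (ZMod p) →+* PowerSeries (ZMod p)) := by
    refine RingHom.ext fun q => ?_
    exact (RatFunc.coe_coe q).symm
  have haev : Polynomial.aeval F E' = 0 := by
    have h1 := congrArg φ hf
    rw [Polynomial.hom_eval₂, map_zero] at h1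
    rw [Polynomial.aeval_def, hE'def, Polynomial.eval₂_map, hcomp]
    exact h1
  have hint : IsIntegral (RatFunc (ZMod p)) F := IsAlgebraic.isIntegral ⟨E', hE', haev⟩
  have hdeg : (minpoly (RatFunc (ZMod p)) F).natDegree ≤ d := by
    have h1 := minpoly.degree_le_of_ne_zero (RatFunc (ZMod p)) F hE' haev
    have h2 : E'.natDegree = d := Polynomial.natDegree_map_eq_of_injective hinj E
    exact h2 ▸ Polynomial.natDegree_le_natDegree h1
  let A := Algebra.adjoin (RatFunc (ZMod p)) ({F} : Set (LaurentSeries (ZMod p)))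
  let pb : PowerBasis (RatFunc (ZMod p)) A := Algebra.adjoin.powerBasis hint
  haveI : Module.Finite (RatFunc (ZMod p)) A := Module.Finite.of_basis pb.basis
  have hfr : Module.finrank (RatFunc (ZMod p)) A = (minpoly (RatFunc (ZMod p)) F).natDegree := by
    rw [pb.finrank]; rfl
  let v : Fin (d + 1) → A := fun i =>
    ⟨F ^ (p ^ (i : ℕ)), pow_mem (Algebra.self_mem_adjoin_singleton (RatFunc (ZMod p)) F) _⟩
  have hnotli : ¬ LinearIndependent (RatFunc (ZMod p)) v := by
    intro hli
    have h1 := hli.fintype_card_le_finrank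
    rw [hfr, Fintype.card_fin] at h1
    omega
  obtain ⟨c, hc0, j, hj⟩ := Fintype.not_linearIndependent_iff.mp hnotli
  have hsum : ∑ i, c i • F ^ (p ^ (i : ℕ)) = 0 := by
    have := congrArg (Subtype.val) hc0
    simpa [v] using this
  obtain ⟨b, hb⟩ := IsLocalization.exist_integer_multiples
    (nonZeroDivisors (Polynomial (ZMod p))) Finset.univ c
  have hb' : ∀ i, ∃ a : Polynomial (ZMod p), algebraMap (Polynomial (ZMod p)) (RatFunc (ZMod p)) a = (b : Polynomial (ZMod p)) • c i :=
    fun i => hb i (Finset.mem_univ i)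
  choose dc hdc using hb'
  have hbK : algebraMap (Polynomial (ZMod p)) (RatFunc (ZMod p)) (b : Polynomial (ZMod p)) ≠ 0 := by
    rw [map_ne_zero_iff _ hinj]
    exact nonZeroDivisors.ne_zero b.2
  refine ⟨dc, ⟨j, fun h => hj ?_⟩, ?_⟩
  · have := hdc j
    rw [h, map_zero, Algebra.smul_def] at this
    exact (mul_eq_zero.mp this.symm).resolve_left hbK
  · have hlaurent : φ (∑ i : Fin (d + 1), ((dc i : PowerSeries (ZMod p)) * psub (p ^ (i : ℕ)) f)) = 0 := by
      rw [map_sum]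
      have hterm : ∀ i : Fin (d + 1),
          φ ((dc i : PowerSeries (ZMod p)) * psub (p ^ (i : ℕ)) f)
          = algebraMap (Polynomial (ZMod p)) (LaurentSeries (ZMod p)) (b : Polynomial (ZMod p))
              * (c i • F ^ (p ^ (i : ℕ))) := by
        intro i
        rw [psub_pow_p, map_mul, map_pow]
        have h1 : φ ((dc i : PowerSeries (ZMod p))) = algebraMap (RatFunc (ZMod p)) (LaurentSeries (ZMod p)) ((b : Polynomial (ZMod p)) • c i) := by
          rw [← hdc i]
          exact (RatFunc.coe_coe (dc i))
        rw [h1, Algebra.smul_def, map_mul, ← IsScalarTower.algebraMap_apply, mul_assoc,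
          Algebra.smul_def]
      rw [Finset.sum_congr rfl (fun i _ => hterm i), ← Finset.mul_sum, hsum, mul_zero]
    have hφinj : Function.Injective φ := HahnSeries.ofPowerSeries_injective
    have := hφinj (hlaurent.trans (map_zero φ).symm)
    simpa using this
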